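/- Let P be a nonzero nonmaximal prime ideal of an integral domain R that is antesharp, i.e., every maximal ideal of (P:P) containing P contracts to P in R. Then P is divisorial: P = (R : (R : P)). -/

import Mathlib

/-- An ideal is divisorial if `I = (R : (R : I))`, phrased via fractional ideals. -/
def IsDivisorial (R : Type*) [CommRing R] [IsDomain R] (I : Ideal R) : Prop :=
  (1 / (1 / (I : FractionalIdeal (nonZeroDivisors R) (FractionRing R))) :
    FractionalIdeal (nonZeroDivisors R) (FractionRing R))
    = (I : FractionalIdeal (nonZeroDivisors R) (FractionRing R))

/-- An ideal is invertible if it is a unit as a fractional ideal. -/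
def IsInvertibleIdeal (R : Type*) [CommRing R] [IsDomain R] (I : Ideal R) : Prop :=
  IsUnit (I : FractionalIdeal (nonZeroDivisors R) (FractionRing R))

/-- A Prüfer domain: every nonzero finitely generated ideal is invertible. -/
def IsPrufer (R : Type*) [CommRing R] [IsDomain R] : Prop :=
  ∀ I : Ideal R, I ≠ ⊥ → I.FG → IsInvertibleIdeal R I

/-- A prime `P` is sharp if it contains a finitely generated ideal contained
only in the maximal ideals that contain `P`. -/
def IsSharp (R : Type*) [CommRing R] (P : Ideal R) : Prop :=
  ∃ I : Ideal R, I.FG ∧ I ≤ P ∧ ∀ M : Ideal R, M.IsMaximal → I ≤ M → P ≤ M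
/-- The ring `(P:P) = {z ∈ K : zP ⊆ P}`, as a subalgebra of the quotient field. -/
def multiplierRing {R : Type*} [CommRing R] [IsDomain R] (P : Ideal R) :
    Subalgebra R (FractionRing R) where
  carrier := {z | ∀ p ∈ P, ∃ q ∈ P,
    z * algebraMap R (FractionRing R) p = algebraMap R (FractionRing R) q}
  mul_mem' := by
    intro z w hz hw p hp
    obtain ⟨q, hq, hqe⟩ := hw p hp
    obtain ⟨r, hr, hre⟩ := hz q hq
    exact ⟨r, hr, by rw [mul_assoc, hqe, hre]⟩
  add_mem' := by
    intro z w hz hw p hp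
    obtain ⟨q, hq, hqe⟩ := hz p hp
    obtain ⟨r, hr, hre⟩ := hw p hp
    exact ⟨q + r, Ideal.add_mem _ hq hr, by rw [add_mul, hqe, hre, map_add]⟩
  algebraMap_mem' := by
    intro r p hp
    exact ⟨r * p, Ideal.mul_mem_left _ _ hp, by rw [map_mul]⟩

set_option maxHeartbeats 1000000 in
set_option synthInstance.maxHeartbeats 400000 in
/-- An antesharp nonzero nonmaximal prime of a domain is divisorial. -/
theorem divisorial_of_antesharp (R : Type*) [CommRing R] [IsDomain R]
    (P : Ideal R) (hP : P.IsPrime) (h0 : P ≠ ⊥) (hnm : ¬ P.IsMaximal)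
    (h : ∀ M' : Ideal (multiplierRing P), M'.IsMaximal →
      P ≤ M'.comap (algebraMap R (multiplierRing P)) →
      M'.comap (algebraMap R (multiplierRing P)) = P) :
    IsDivisorial R P := by
  classical
  set K := FractionRing R
  set f : R →+* K := algebraMap R K with hfdef
  have hf : Function.Injective f := IsFractionRing.injective R K
  set T := multiplierRing P with hTdef
  have halg : ∀ r : R, ((algebraMap R T r : T) : K) = f r := fun r => rfl
  rcases Classical.em (∀ t : T, (t : K) ∈ Set.range f) with hT | hT
  · -- T = R, so antesharp forces P maximal, contradiction
    exfalso
    have hbij : Function.Bijective (algebraMap R T) := by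
      constructor
      · intro a b hab
        apply hf
        rw [← halg a, ← halg b, hab]
      · intro t
        obtain ⟨r, hr⟩ := hT t
        exact ⟨r, Subtype.ext (by rw [halg, hr])⟩
    obtain ⟨M, hM, hPM⟩ := Ideal.exists_le_maximal P hP.ne_top
    let e : R ≃+* T := RingEquiv.ofBijective (algebraMap R T) hbij
    have hMmax : (Ideal.comap (e.symm : T →+* R) M).IsMaximal :=
      Ideal.comap_isMaximal_of_surjective _ e.symm.surjective
    have hcomap : Ideal.comap (algebraMap R T) (Ideal.comap (e.symm : T →+* R) M) = M := by
      rw [Ideal.comap_comap]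
      have : (e.symm : T →+* R).comp (algebraMap R T) = RingHom.id R := by
        ext r
        exact e.injective (by simp [e])
      rw [this, Ideal.comap_id]
    have hMP : M = P := by
      have := h _ hMmax (by rw [hcomap]; exact hPM)
      rw [hcomap] at this
      exact this
    exact hnm (hMP ▸ hM)
  · push_neg at hT
    obtain ⟨t0, ht0⟩ := hT
    -- the conductor-like ideal C = (R : T) ∩ R
    let C : Ideal R :=
      { carrier := {r : R | ∀ t : T, ∃ b : R, f r * (t : K) = f b}
        add_mem' := by
          intro a b ha hb t
          obtain ⟨c, hc⟩ := ha t
          obtain ⟨d, hd⟩ := hb t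
          exact ⟨c + d, by rw [map_add, map_add, add_mul, hc, hd]⟩
        zero_mem' := by intro t; exact ⟨0, by simp⟩
        smul_mem' := by
          intro c a ha t
          obtain ⟨b, hb⟩ := ha t
          exact ⟨c * b, by rw [smul_eq_mul, map_mul, map_mul, mul_assoc, hb]⟩ }
    have hCne : C ≠ ⊤ := by
      intro hC
      have h1 : (1 : R) ∈ C := hC ▸ Submodule.mem_top
      obtain ⟨b, hb⟩ := h1 t0
      exact ht0 ⟨b, by rw [← hb, map_one, one_mul]⟩
    have hPC : P ≤ C := by
      intro p hp t
      obtain ⟨q, _, hq⟩ := t.2 p hp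
      exact ⟨q, by rw [mul_comm, hq]⟩
    -- the ideal J of T whose elements lie in f '' P
    let J : Ideal T :=
      { carrier := {x : T | ∃ p ∈ P, f p = (x : K)}
        add_mem' := by
          rintro a b ⟨p, hp, hpe⟩ ⟨q, hq, hqe⟩
          exact ⟨p + q, P.add_mem hp hq, by rw [map_add, hpe, hqe]; rfl⟩
        zero_mem' := ⟨0, P.zero_mem, by rw [map_zero]; rfl⟩
        smul_mem' := by
          rintro c a ⟨p, hp, hpe⟩
          obtain ⟨q, hq, hqe⟩ := c.2 p hp
          refine ⟨q, hq, ?_⟩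
          rw [← hqe, hpe]
          rfl }
    have hJne : J ≠ ⊤ := by
      intro hJ
      have h1 : (1 : T) ∈ J := hJ ▸ Submodule.mem_top
      obtain ⟨p, hp, hpe⟩ := h1
      have hp1 : p = 1 := hf (by rw [hpe, map_one]; rfl)
      exact hP.ne_top (Ideal.eq_top_of_isUnit_mem P hp (hp1 ▸ isUnit_one))
    obtain ⟨M', hM'max, hJM'⟩ := Ideal.exists_le_maximal J hJne
    have hPM' : P ≤ Ideal.comap (algebraMap R T) M' := by
      intro p hp
      exact hJM' ⟨p, hp, rfl⟩
    have hcomap : Ideal.comap (algebraMap R T) M' = P := h M' hM'max hPM'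
    -- key claim: C ≤ P
    have hCP : C ≤ P := by
      intro a ha
      by_contra haP
      have haM' : algebraMap R T a ∉ M' := fun hmem => haP (hcomap ▸ hmem)
      obtain ⟨y, m, hm, hym⟩ := hM'max.exists_inv haM'
      obtain ⟨b, hb⟩ := ha y
      have hmval : ((m : T) : K) = f (1 - b) := by
        have hcg := congrArg (fun x : T => (x : K)) hym
        push_cast at hcg
        have hcg' : (y : K) * f a + (m : K) = 1 := hcg
        rw [map_sub, map_one, ← hcg', mul_comm (y : K) (f a), hb]
        ring
      have h1b : (1 - b : R) ∈ P := by
        rw [← hcomap]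
        show algebraMap R T (1 - b) ∈ M'
        have : algebraMap R T (1 - b) = m := Subtype.ext (by rw [halg, hmval])
        rw [this]; exact hm
      have hbC : b ∈ C := by
        intro t
        obtain ⟨c, hc⟩ := ha (y * t)
        refine ⟨c, ?_⟩
        rw [← hc, ← hb]
        push_cast
        ring
      have h1C : (1 : R) ∈ C := by
        have := C.add_mem hbC (hPC h1b)
        simpa using this
      exact hCne (C.eq_top_of_isUnit_mem h1C isUnit_one)
    -- now the fractional ideal computation
    set I : FractionalIdeal (nonZeroDivisors R) K := (P : FractionalIdeal (nonZeroDivisors R) K)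
      with hIdef
    have hI0 : I ≠ 0 := FractionalIdeal.coeIdeal_ne_zero.mpr h0
    have h1mem : (1 : K) ∈ (1 / I : FractionalIdeal (nonZeroDivisors R) K) := by
      rw [FractionalIdeal.mem_div_iff_of_ne_zero hI0]
      intro y hy
      obtain ⟨p, _, hp⟩ := (FractionalIdeal.mem_coeIdeal _).mp hy
      rw [one_mul, ← hp]
      exact (FractionalIdeal.mem_one_iff _).mpr ⟨p, rfl⟩
    have hinv0 : (1 / I : FractionalIdeal (nonZeroDivisors R) K) ≠ 0 := by
      intro hz
      rw [hz] at h1mem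
      simp at h1mem
    show (1 / (1 / I) : FractionalIdeal (nonZeroDivisors R) K) = I
    apply le_antisymm
    · intro x hx
      have hx' : ∀ y ∈ (1 / I : FractionalIdeal (nonZeroDivisors R) K), x * y ∈
          (1 : FractionalIdeal (nonZeroDivisors R) K) :=
        (FractionalIdeal.mem_div_iff_of_ne_zero hinv0).mp hx
      obtain ⟨a, ha⟩ := (FractionalIdeal.mem_one_iff (nonZeroDivisors R)).mp (by simpa using hx' 1 h1mem)
      -- T ⊆ 1/I, so a ∈ C
      have hTdiv : ∀ t : T, (t : K) ∈ (1 / I : FractionalIdeal (nonZeroDivisors R) K) := by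
        intro t
        rw [FractionalIdeal.mem_div_iff_of_ne_zero hI0]
        intro y hy
        obtain ⟨p, hp, hpe⟩ := (FractionalIdeal.mem_coeIdeal _).mp hy
        obtain ⟨q, _, hq⟩ := t.2 p hp
        rw [← hpe, hq]
        exact (FractionalIdeal.mem_one_iff _).mpr ⟨q, rfl⟩
      have haC : a ∈ C := by
        intro t
        obtain ⟨b, hb⟩ := (FractionalIdeal.mem_one_iff _).mp (hx' _ (hTdiv t))
        exact ⟨b, by rw [ha, hb]⟩
      exact (FractionalIdeal.mem_coeIdeal _).mpr ⟨a, hCP haC, ha⟩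
    · intro x hx
      have : ∀ y ∈ (1 / I : FractionalIdeal (nonZeroDivisors R) K), x * y ∈
          (1 : FractionalIdeal (nonZeroDivisors R) K) := by
        intro y hy
        rw [mul_comm]
        exact (FractionalIdeal.mem_div_iff_of_ne_zero hI0).mp hy x hx
      exact (FractionalIdeal.mem_div_iff_of_ne_zero hinv0).mpr this
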